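/- Let d ≥ 1, m ≥ 1 be integers and let p be a probability density on [0,1]^d with 0 < inf p ≤ sup p < ∞. For x = (x_1,…,x_d) ∈ [0,1]^d define W_m^x(z_1,…,z_d) := (∏_{i=1}^d w_m^{x_i}(z_i)) · p(z_1,…,z_d)^{-1}. Then for all y ∈ [0,1]^d and all nonnegative integers ℓ with 2ℓ ≤ m-1, the generalized moment property ∫_{[0,1]^d} (‖y-z‖₂²)^ℓ W_m^x(z) p(z) dz = (‖y-x‖₂²)^ℓ holds. -/

import Mathlib

open MeasureTheory

/-- The `m × m` Hilbert matrix `H_m = (1/(i+j-1))_{i,j=1}^m` (0-indexed here). -/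
noncomputable def hilbertMatrix (m : ℕ) : Matrix (Fin m) (Fin m) ℝ :=
  fun i j => 1 / ((i.1 : ℝ) + (j.1 : ℝ) + 1)

lemma mmp_int_pow (n : ℕ) : ∫ t in Set.Icc (0:ℝ) 1, t ^ n = 1 / (n + 1) := by
  rw [integral_Icc_eq_integral_Ioc, ← intervalIntegral.integral_of_le zero_le_one,
    integral_pow]
  simp

lemma mmp_w_integrable (m : ℕ) (α : Fin m → ℝ) (a : ℕ) (y : ℝ) :
    IntegrableOn (fun t : ℝ => (y - t) ^ a * (∑ j : Fin m, α j * t ^ (j.1)))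
      (Set.Icc (0:ℝ) 1) volume := by
  apply Continuous.integrableOn_Icc
  continuity

lemma mmp_moment (m : ℕ) (x : ℝ) (α : Fin m → ℝ)
    (hα : (hilbertMatrix m).mulVec α = fun j => x ^ (j.1))
    (k : ℕ) (hk : k < m) :
    ∫ t in Set.Icc (0:ℝ) 1, t ^ k * (∑ j : Fin m, α j * t ^ (j.1)) = x ^ k := by
  have h1 : ∀ t : ℝ, t ^ k * (∑ j : Fin m, α j * t ^ (j.1))
      = ∑ j : Fin m, α j * t ^ (k + j.1) := by
    intro t
    rw [Finset.mul_sum]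
    exact Finset.sum_congr rfl fun j _ => by rw [pow_add]; ring
  simp_rw [h1]
  rw [integral_finset_sum]
  · have h2 : ∀ j : Fin m, (∫ t in Set.Icc (0:ℝ) 1, α j * t ^ (k + j.1))
        = α j * (1 / ((k : ℝ) + (j.1 : ℝ) + 1)) := by
      intro j
      rw [integral_const_mul, mmp_int_pow]
      push_cast
      ring_nf
    simp_rw [h2]
    have := congrFun hα ⟨k, hk⟩
    simp only [Matrix.mulVec, dotProduct, hilbertMatrix] at this
    rw [← this]
    exact Finset.sum_congr rfl fun j _ => by ring
  · intro j _
    apply Continuous.integrableOn_Icc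
    continuity

lemma mmp_oneD (m : ℕ) (x y : ℝ) (α : Fin m → ℝ)
    (hα : (hilbertMatrix m).mulVec α = fun j => x ^ (j.1))
    (n : ℕ) (hn : n < m) :
    ∫ t in Set.Icc (0:ℝ) 1, (y - t) ^ n * (∑ j : Fin m, α j * t ^ (j.1)) = (y - x) ^ n := by
  have h1 : ∀ t : ℝ, (y - t) ^ n * (∑ j : Fin m, α j * t ^ (j.1))
      = ∑ r ∈ Finset.range (n + 1), ((-1 : ℝ) ^ (r + n) * y ^ r * n.choose r)
          * (t ^ (n - r) * (∑ j : Fin m, α j * t ^ (j.1))) := by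
    intro t
    rw [sub_pow, Finset.sum_mul]
    exact Finset.sum_congr rfl fun r _ => by ring
  simp_rw [h1]
  rw [integral_finset_sum]
  · have h2 : ∀ r ∈ Finset.range (n + 1),
        (∫ t in Set.Icc (0:ℝ) 1, ((-1 : ℝ) ^ (r + n) * y ^ r * n.choose r)
          * (t ^ (n - r) * (∑ j : Fin m, α j * t ^ (j.1))))
        = (-1 : ℝ) ^ (r + n) * y ^ r * x ^ (n - r) * n.choose r := by
      intro r _
      rw [integral_const_mul, mmp_moment m x α hα (n - r) (lt_of_le_of_lt (Nat.sub_le n r) hn)]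
      ring
    rw [Finset.sum_congr rfl h2, ← sub_pow]
  · intro r _
    apply Continuous.integrableOn_Icc
    fun_prop

lemma mmp_expand (d ℓ : ℕ) (v : Fin d → ℝ) :
    (∑ i : Fin d, v i ^ 2) ^ ℓ
      = ∑ g : Fin ℓ → Fin d, ∏ i : Fin d,
          v i ^ (2 * (Finset.univ.filter (fun k => g k = i)).card) := by
  have h1 : (∑ i : Fin d, v i ^ 2) ^ ℓ = ∏ _k : Fin ℓ, ∑ i : Fin d, v i ^ 2 := by
    rw [Finset.prod_const, Finset.card_univ, Fintype.card_fin]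
  rw [h1, Finset.prod_univ_sum, Fintype.piFinset_univ]
  refine Finset.sum_congr rfl fun g _ => ?_
  calc ∏ k : Fin ℓ, v (g k) ^ 2
      = ∏ i : Fin d, ∏ k ∈ Finset.univ.filter (fun k => g k = i), v (g k) ^ 2 :=
        (Finset.prod_fiberwise _ _ _).symm
    _ = ∏ i : Fin d, v i ^ (2 * (Finset.univ.filter (fun k => g k = i)).card) := by
        refine Finset.prod_congr rfl fun i _ => ?_
        rw [Finset.prod_congr rfl (fun k hk => by rw [(Finset.mem_filter.1 hk).2]),
          Finset.prod_const, ← pow_mul, mul_comm]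

lemma mmp_prod_integral (d : ℕ) (q : Fin d → ℝ → ℝ) :
    (∫ z in Set.Icc (0 : Fin d → ℝ) 1, ∏ i, q i (z i))
      = ∏ i, ∫ t in Set.Icc (0:ℝ) 1, q i t := by
  have hbox : Set.Icc (0 : Fin d → ℝ) 1 = Set.pi Set.univ fun _ => Set.Icc (0:ℝ) 1 := by
    rw [← Set.pi_univ_Icc]; rfl
  rw [hbox, ← integral_indicator (MeasurableSet.univ_pi fun _ => measurableSet_Icc)]
  have hind : ∀ z : Fin d → ℝ,
      Set.indicator (Set.pi Set.univ fun _ => Set.Icc (0:ℝ) 1)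
        (fun z : Fin d → ℝ => ∏ i, q i (z i)) z
      = ∏ i, Set.indicator (Set.Icc (0:ℝ) 1) (q i) (z i) := by
    intro z
    by_cases hz : z ∈ Set.pi Set.univ fun _ => Set.Icc (0:ℝ) 1
    · rw [Set.indicator_of_mem hz]
      exact Finset.prod_congr rfl fun i _ =>
        (Set.indicator_of_mem (hz i (Set.mem_univ i)) _).symm
    · rw [Set.indicator_of_notMem hz]
      simp only [Set.mem_pi, Set.mem_univ, forall_true_left, not_forall] at hz
      obtain ⟨i, hi⟩ := hz
      symm
      exact Finset.prod_eq_zero (Finset.mem_univ i) (Set.indicator_of_notMem hi _)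
  simp_rw [hind]
  rw [integral_fintype_prod_volume_eq_prod (fun i => Set.indicator (Set.Icc (0:ℝ) 1) (q i))]
  exact Finset.prod_congr rfl fun i _ => integral_indicator measurableSet_Icc

/-- The multivariate weight function
`W_m^x(z) = (∏_{i=1}^d w_m^{x_i}(z_i)) · p(z)⁻¹` satisfies the generalized moment
property `∫_{[0,1]^d} (‖y-z‖₂²)^ℓ W_m^x(z) p(z) dz = (‖y-x‖₂²)^ℓ` for all
`y ∈ [0,1]^d` and all nonnegative integers `ℓ` with `2ℓ ≤ m-1`. -/
theorem multivariate_moment_property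
    (d m : ℕ) (hd : 1 ≤ d) (hm : 1 ≤ m)
    (p : (Fin d → ℝ) → ℝ)
    (hp1 : (∫ z in Set.Icc (0 : Fin d → ℝ) 1, p z) = 1)
    (hpl : ∃ c : ℝ, 0 < c ∧ ∀ z ∈ Set.Icc (0 : Fin d → ℝ) 1, c ≤ p z)
    (hpu : ∃ C : ℝ, ∀ z ∈ Set.Icc (0 : Fin d → ℝ) 1, p z ≤ C)
    (x : Fin d → ℝ) (hx : x ∈ Set.Icc (0 : Fin d → ℝ) 1)
    (α : Fin d → Fin m → ℝ)
    (hα : ∀ i : Fin d, (hilbertMatrix m).mulVec (α i) = fun j => (x i) ^ (j.1))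
    (W : (Fin d → ℝ) → ℝ)
    (hW : W = fun z => (∏ i : Fin d, ∑ j : Fin m, α i j * (z i) ^ (j.1)) * (p z)⁻¹)
    (y : Fin d → ℝ) (hy : y ∈ Set.Icc (0 : Fin d → ℝ) 1)
    (ℓ : ℕ) (hℓ : 2 * ℓ ≤ m - 1) :
    (∫ z in Set.Icc (0 : Fin d → ℝ) 1, (∑ i : Fin d, (y i - z i) ^ 2) ^ ℓ * W z * p z)
      = (∑ i : Fin d, (y i - x i) ^ 2) ^ ℓ := by
  obtain ⟨c, hc, hcp⟩ := hpl
  have hstep1 : Set.EqOn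
      (fun z : Fin d → ℝ => (∑ i : Fin d, (y i - z i) ^ 2) ^ ℓ * W z * p z)
      (fun z : Fin d → ℝ => ∑ g : Fin ℓ → Fin d, ∏ i : Fin d,
        ((y i - z i) ^ (2 * (Finset.univ.filter (fun k => g k = i)).card)
          * (∑ j : Fin m, α i j * (z i) ^ (j.1))))
      (Set.Icc (0 : Fin d → ℝ) 1) := by
    intro z hz
    have hpz : p z ≠ 0 := ne_of_gt (lt_of_lt_of_le hc (hcp z hz))
    have h2 : (∑ i : Fin d, (y i - z i) ^ 2) ^ ℓ * W z * p z
        = (∑ i : Fin d, (y i - z i) ^ 2) ^ ℓ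
          * ∏ i : Fin d, ∑ j : Fin m, α i j * (z i) ^ (j.1) := by
      rw [hW]; field_simp
    dsimp only
    rw [h2, mmp_expand d ℓ (fun i => y i - z i), Finset.sum_mul]
    exact Finset.sum_congr rfl fun g _ => (Finset.prod_mul_distrib).symm
  rw [setIntegral_congr_fun measurableSet_Icc hstep1, integral_finset_sum]
  · have h3 : ∀ g : Fin ℓ → Fin d,
        (∫ z in Set.Icc (0 : Fin d → ℝ) 1, ∏ i : Fin d,
          ((y i - z i) ^ (2 * (Finset.univ.filter (fun k => g k = i)).card)
            * (∑ j : Fin m, α i j * (z i) ^ (j.1))))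
        = ∏ i : Fin d,
            (y i - x i) ^ (2 * (Finset.univ.filter (fun k => g k = i)).card) := by
      intro g
      rw [mmp_prod_integral d (fun i t =>
        (y i - t) ^ (2 * (Finset.univ.filter (fun k => g k = i)).card)
          * (∑ j : Fin m, α i j * t ^ (j.1)))]
      refine Finset.prod_congr rfl fun i _ => ?_
      refine mmp_oneD m (x i) (y i) (α i) (hα i) _ ?_
      have hcard : (Finset.univ.filter (fun k => g k = i)).card ≤ ℓ := by
        simpa using Finset.card_filter_le Finset.univ (fun k => g k = i)
      omega
    simp_rw [h3]
    exact (mmp_expand d ℓ (fun i => y i - x i)).symm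
  · intro g _
    apply Continuous.integrableOn_Icc
    apply continuous_finset_prod
    intro i _
    fun_prop
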